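/- Let Ω ⊆ ℝ^n be open and let u, φ be C² on Ω with φ > 0. Then pointwise on Ω: |∇u|⁴ + (Δφ/φ + 4) u⁴ = ( |∇u|² − 2u² )² + |∇(u²) − (∇φ/φ) u²|² + div((∇φ/φ) u⁴). -/

import Mathlib

open MeasureTheory Finset
open scoped RealInnerProductSpace

noncomputable def grad {n : ℕ} (f : EuclideanSpace ℝ (Fin n) → ℝ) :
    EuclideanSpace ℝ (Fin n) → EuclideanSpace ℝ (Fin n) :=
  fun x => gradient f x

noncomputable def dvg {n : ℕ} (V : EuclideanSpace ℝ (Fin n) → EuclideanSpace ℝ (Fin n)) :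
    EuclideanSpace ℝ (Fin n) → ℝ :=
  fun x => ∑ i, fderiv ℝ V x (EuclideanSpace.single i 1) i

noncomputable def lap {n : ℕ} (f : EuclideanSpace ℝ (Fin n) → ℝ) :
    EuclideanSpace ℝ (Fin n) → ℝ :=
  dvg (grad f)

lemma inner_gradient {n : ℕ} (f : EuclideanSpace ℝ (Fin n) → ℝ)
    (x v : EuclideanSpace ℝ (Fin n)) :
    ⟪gradient f x, v⟫ = fderiv ℝ f x v := by
  simp [gradient, InnerProductSpace.toDual_symm_apply]

lemma clm_apply_eq_sum {n : ℕ} (L : EuclideanSpace ℝ (Fin n) →L[ℝ] ℝ)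
    (w : EuclideanSpace ℝ (Fin n)) :
    L w = ∑ i, w i * L (EuclideanSpace.single i 1) := by
  have hw : w = ∑ i, w i • EuclideanSpace.single i (1:ℝ) := by
    ext j
    rw [WithLp.ofLp_sum, Fintype.sum_apply]
    simp [EuclideanSpace.single_apply]
  conv_lhs => rw [hw]
  simp [smul_eq_mul]

set_option maxHeartbeats 1000000 in
theorem stmt8 {n : ℕ} (Ω : Set (EuclideanSpace ℝ (Fin n))) (hΩ : IsOpen Ω)
    (u φ : EuclideanSpace ℝ (Fin n) → ℝ)
    (hu : ContDiffOn ℝ 2 u Ω) (hφ : ContDiffOn ℝ 2 φ Ω)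
    (hφpos : ∀ x ∈ Ω, 0 < φ x) :
    ∀ x ∈ Ω,
      ‖grad u x‖ ^ 4 + (lap φ x / φ x + 4) * (u x) ^ 4 =
        (‖grad u x‖ ^ 2 - 2 * (u x) ^ 2) ^ 2 +
        ‖grad (fun y => (u y) ^ 2) x - ((u x) ^ 2 / φ x) • grad φ x‖ ^ 2 +
        dvg (fun y => ((u y) ^ 4 / φ y) • grad φ y) x := by
  intro x hx
  have hmem : Ω ∈ nhds x := hΩ.mem_nhds hx
  have hu2 : ContDiffAt ℝ 2 u x := hu.contDiffAt hmem
  have hφ2 : ContDiffAt ℝ 2 φ x := hφ.contDiffAt hmem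
  have hud : DifferentiableAt ℝ u x := hu2.differentiableAt (by norm_num)
  have hφd : DifferentiableAt ℝ φ x := hφ2.differentiableAt (by norm_num)
  have hp : φ x ≠ 0 := (hφpos x hx).ne'
  set U : EuclideanSpace ℝ (Fin n) →L[ℝ] ℝ := fderiv ℝ u x with hUdef
  set Φ : EuclideanSpace ℝ (Fin n) →L[ℝ] ℝ := fderiv ℝ φ x with hΦdef
  have hU : HasFDerivAt u U x := hud.hasFDerivAt
  have hΦ : HasFDerivAt φ Φ x := hφd.hasFDerivAt
  -- square and fourth power of u
  have hsq : HasFDerivAt (fun y => u y ^ 2) (u x • U + u x • U) x := by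
    simpa [pow_two, Pi.mul_def] using hU.mul hU
  have hquad : HasFDerivAt (fun y => u y ^ 4)
      (u x ^ 2 • (u x • U + u x • U) + u x ^ 2 • (u x • U + u x • U)) x := by
    have h := hsq.mul hsq
    have : (fun y => u y ^ 2 * u y ^ 2) = fun y => u y ^ 4 := by funext y; ring
    simp only [Pi.mul_def] at h
    rwa [this] at h
  -- inverse of φ
  have hinv : HasFDerivAt (fun y => (φ y)⁻¹)
      ((-(ContinuousLinearMap.mulLeftRight ℝ ℝ (φ x)⁻¹ (φ x)⁻¹)).comp Φ) x := by
    exact (hasFDerivAt_inv' hp).comp x hΦ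
  -- the scalar function f = u^4 / φ
  have hf : HasFDerivAt (fun y => u y ^ 4 / φ y)
      ((u x ^ 4) • ((-(ContinuousLinearMap.mulLeftRight ℝ ℝ (φ x)⁻¹ (φ x)⁻¹)).comp Φ)
        + (φ x)⁻¹ • (u x ^ 2 • (u x • U + u x • U) + u x ^ 2 • (u x • U + u x • U))) x := by
    have h := hquad.mul hinv
    have : (fun y => u y ^ 4 * (φ y)⁻¹) = fun y => u y ^ 4 / φ y := by
      funext y; rw [div_eq_mul_inv]
    simp only [Pi.mul_def] at h
    rwa [this] at h
  -- differentiability of grad φ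
  have hΦ' : DifferentiableAt ℝ (fderiv ℝ φ) x :=
    (hφ2.fderiv_right (m := 1) (by norm_num)).differentiableAt one_ne_zero
  set D := fderiv ℝ (fderiv ℝ φ) x with hDdef
  set T : (EuclideanSpace ℝ (Fin n) →L[ℝ] ℝ) →L[ℝ] EuclideanSpace ℝ (Fin n) :=
    ((InnerProductSpace.toDual ℝ (EuclideanSpace ℝ (Fin n))).symm.toContinuousLinearEquiv :
      (EuclideanSpace ℝ (Fin n) →L[ℝ] ℝ) ≃L[ℝ] EuclideanSpace ℝ (Fin n)).toContinuousLinearMap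
    with hTdef
  have hW : HasFDerivAt (grad φ) (T.comp D) x := by
    have h1 : HasFDerivAt (fun L : EuclideanSpace ℝ (Fin n) →L[ℝ] ℝ => T L) T
        (fderiv ℝ φ x) := T.hasFDerivAt
    have h2 := h1.comp x hΦ'.hasFDerivAt
    exact h2
  -- derivative of the vector field
  set Ff := (u x ^ 4) • ((-(ContinuousLinearMap.mulLeftRight ℝ ℝ (φ x)⁻¹ (φ x)⁻¹)).comp Φ)
        + (φ x)⁻¹ • (u x ^ 2 • (u x • U + u x • U) + u x ^ 2 • (u x • U + u x • U)) with hFfdef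
  have hV : HasFDerivAt (fun y => (u y ^ 4 / φ y) • grad φ y)
      ((u x ^ 4 / φ x) • (T.comp D) + Ff.smulRight (grad φ x)) x := hf.smul hW
  -- compute dvg of the vector field
  have hlap : lap φ x = ∑ i, (T (D (EuclideanSpace.single i 1))) i := by
    simp only [lap, dvg, hW.fderiv]
    rfl
  have hdvg : dvg (fun y => ((u y) ^ 4 / φ y) • grad φ y) x
      = (u x ^ 4 / φ x) * lap φ x + Ff (grad φ x) := by
    simp only [dvg, hV.fderiv]
    rw [hlap, clm_apply_eq_sum Ff (grad φ x), Finset.mul_sum, ← Finset.sum_add_distrib]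
    congr 1
    funext i
    simp [smul_eq_mul]
    ring
  -- inner products
  have hUv : ∀ w, U w = ⟪grad u x, w⟫ := fun w => (inner_gradient u x w).symm
  have hΦv : ∀ w, Φ w = ⟪grad φ x, w⟫ := fun w => (inner_gradient φ x w).symm
  have hFfv : Ff (grad φ x) =
      u x ^ 4 * -((φ x)⁻¹ * ⟪grad φ x, grad φ x⟫ * (φ x)⁻¹)
      + (φ x)⁻¹ * (u x ^ 2 * (u x * ⟪grad u x, grad φ x⟫ + u x * ⟪grad u x, grad φ x⟫)
          + u x ^ 2 * (u x * ⟪grad u x, grad φ x⟫ + u x * ⟪grad u x, grad φ x⟫)) := by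
    simp only [hFfdef, ContinuousLinearMap.add_apply, ContinuousLinearMap.coe_smul',
      Pi.smul_apply, ContinuousLinearMap.comp_apply, ContinuousLinearMap.neg_apply,
      ContinuousLinearMap.mulLeftRight_apply, smul_eq_mul, hUv, hΦv]
  -- gradient of u^2
  have hgr2 : grad (fun y => (u y) ^ 2) x = u x • grad u x + u x • grad u x := by
    unfold grad gradient
    rw [hsq.fderiv, map_add, _root_.map_smul]
  -- now everything is scalar algebra
  rw [hdvg, hFfv, hgr2]
  have hexp : ‖u x • grad u x + u x • grad u x - (u x ^ 2 / φ x) • grad φ x‖ ^ 2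
      = ‖(2 * u x) • grad u x - (u x ^ 2 / φ x) • grad φ x‖ ^ 2 := by
    rw [two_mul, add_smul]
  rw [hexp, norm_sub_sq_real]
  rw [norm_smul, norm_smul, real_inner_smul_left, real_inner_smul_right]
  simp only [Real.norm_eq_abs, mul_pow, sq_abs]
  rw [real_inner_self_eq_norm_sq]
  set G := ‖grad u x‖
  set Vn := ‖grad φ x‖
  set c := ⟪grad u x, grad φ x⟫
  set a := u x
  set p := φ x
  set L := lap φ x
  field_simp
  ring
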